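/- arXiv:0707.1411 — 2 statements merged into one kernel-verified Lean document; each statement's English description precedes it below -/
import Mathlib

section
/- Let K be a pure, strongly connected simplicial d-complex with facet σ₀. The number of connected components of the partial unfolding of K equals the number of orbits of Π(K,σ₀) on V(σ₀); in particular, if Π(K,σ₀) acts transitively on the d+1 vertices of σ₀ then the partial unfolding is connected, and if K is foldable then the partial unfolding has exactly d+1 connected components, each mapping isomorphically to K under the canonical projection. -/
open Finset

variable {V : Type*} [DecidableEq V]

/-- A (finite abstract) simplicial complex: faces are nonempty and closed under
nonempty subsets. -/
def IsComplex (K : Finset (Finset V)) : Prop :=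
  ∀ f ∈ K, f.Nonempty ∧ ∀ g, g ⊆ f → g.Nonempty → g ∈ K

/-- `K` is pure of dimension `d`: every face is contained in a face with `d+1` vertices. -/
def IsPure (K : Finset (Finset V)) (d : ℕ) : Prop :=
  ∀ f ∈ K, ∃ σ ∈ K, f ⊆ σ ∧ σ.card = d + 1

/-- A facet of a pure `d`-complex: a face with `d+1` vertices. -/
def IsFacet (K : Finset (Finset V)) (d : ℕ) (σ : Finset V) : Prop :=
  σ ∈ K ∧ σ.card = d + 1

/-- Two facets are neighboring if they share a ridge (codimension-1 face). -/
def Neighboring (K : Finset (Finset V)) (d : ℕ) (σ τ : Finset V) : Prop :=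
  IsFacet K d σ ∧ IsFacet K d τ ∧ (σ ∩ τ).card = d

/-- The perspectivity `⟨σ,τ⟩` between neighboring facets: it fixes the common
vertices and sends the vertex `σ \ τ` to the vertex `τ \ σ`. -/
noncomputable def persp (σ τ : Finset V) (v : V) : V :=
  if v ∈ τ then v else if h : (τ \ σ).Nonempty then h.choose else v

/-- The projectivity along a facet path: the composition of consecutive perspectivities. -/
noncomputable def projAlong : List (Finset V) → V → V
  | [] => id
  | [_] => id
  | σ :: τ :: rest => fun v => projAlong (τ :: rest) (persp σ τ v)

/-- A facet path: a nonempty sequence of facets in which consecutive facets share a ridge. -/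
def IsFacetPath (K : Finset (Finset V)) (d : ℕ) (γ : List (Finset V)) : Prop :=
  γ ≠ [] ∧ (∀ σ ∈ γ, IsFacet K d σ) ∧ γ.Chain' (fun σ τ => (σ ∩ τ).card = d)

/-- `K` is strongly connected: any two facets are joined by a facet path. -/
def StronglyConnected (K : Finset (Finset V)) (d : ℕ) : Prop :=
  ∀ σ τ, IsFacet K d σ → IsFacet K d τ →
    ∃ γ, IsFacetPath K d γ ∧ γ.head? = some σ ∧ γ.getLast? = some τ

/-- `K` is locally strongly connected: the star of every face is strongly connected. -/
def LocallyStronglyConnected (K : Finset (Finset V)) (d : ℕ) : Prop :=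
  ∀ f ∈ K, ∀ σ τ, IsFacet K d σ → IsFacet K d τ → f ⊆ σ → f ⊆ τ →
    ∃ γ, IsFacetPath K d γ ∧ γ.head? = some σ ∧ γ.getLast? = some τ ∧ ∀ ρ ∈ γ, f ⊆ ρ

/-- The vertex set of a complex. -/
def vertexSet (K : Finset (Finset V)) : Finset V := K.biUnion id

/-- A proper coloring of the 1-skeleton of `K`: the endpoints of every edge
(2-element face) receive distinct colors. -/
def ProperColoring {α : Type*} (K : Finset (Finset V)) (c : V → α) : Prop :=
  ∀ v w, v ≠ w → ({v, w} : Finset V) ∈ K → c v ≠ c w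

/-- A codimension-2 face `f` is odd if its link graph is not 2-colorable (not bipartite). -/
def OddFace (K : Finset (Finset V)) (f : Finset V) : Prop :=
  ¬ ∃ b : V → Bool, ∀ w w', w ∉ f → w' ∉ f → w ≠ w' →
      f ∪ {w, w'} ∈ K → b w ≠ b w'

/-- Stellar subdivision of the edge `e` of `K` by the new vertex `u`:
faces not containing `e` are kept; every face containing `e` is replaced by the
cones of `u` over the faces of its boundary not containing `e`. -/
def stellarSub (K : Finset (Finset V)) (e : Finset V) (u : V) : Finset (Finset V) :=
  K.filter (fun f => ¬ e ⊆ f) ∪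
    (K.filter fun f => e ⊆ f).biUnion fun f =>
      e.biUnion fun x => ((f.erase x).powerset).image fun g => insert u g

/-- `EdgeSubdivSeq K K'` : `K'` is obtained from `K` by a finite sequence of stellar
subdivisions of edges (each subdividing vertex being a fresh vertex). -/
inductive EdgeSubdivSeq : Finset (Finset V) → Finset (Finset V) → Prop
  | refl (K : Finset (Finset V)) : EdgeSubdivSeq K K
  | step (K L : Finset (Finset V)) (e : Finset V) (u : V) :
      EdgeSubdivSeq K L → e ∈ L → e.card = 2 → u ∉ vertexSet L →
      EdgeSubdivSeq K (stellarSub L e u)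

/-- A boundary ridge: a `(d-1)`-dimensional face contained in exactly one facet. -/
def IsBoundaryRidge (K : Finset (Finset V)) (d : ℕ) (g : Finset V) : Prop :=
  g ∈ K ∧ g.card = d ∧ (K.filter fun τ => τ.card = d + 1 ∧ g ⊆ τ).card = 1

/-- Adjacency of labeled facets in the partial unfolding. -/
def unfAdj (K : Finset (Finset V)) (d : ℕ) (p q : Finset V × V) : Prop :=
  Neighboring K d p.1 q.1 ∧ p.2 ∈ p.1 ∧ q.2 ∈ q.1 ∧ persp p.1 q.1 p.2 = q.2

/-- Reachability (connected components) in the partial unfolding. -/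
def UnfReach (K : Finset (Finset V)) (d : ℕ) : Finset V × V → Finset V × V → Prop :=
  Relation.ReflTransGen fun p q => unfAdj K d p q ∨ unfAdj K d q p

section Aux

variable {V : Type*} [DecidableEq V]

lemma sdiff_card_one {K : Finset (Finset V)} {d : ℕ} {σ τ : Finset V}
    (h : Neighboring K d σ τ) : (τ \ σ).card = 1 := by
  obtain ⟨hσ, hτ, hin⟩ := h
  have h1 := Finset.card_sdiff_add_card_inter τ σ
  have h2 := hτ.2
  rw [Finset.inter_comm] at hin
  omega

lemma neighboring_symm {K : Finset (Finset V)} {d : ℕ} {σ τ : Finset V}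
    (h : Neighboring K d σ τ) : Neighboring K d τ σ := by
  obtain ⟨hσ, hτ, hin⟩ := h
  exact ⟨hτ, hσ, by rwa [Finset.inter_comm]⟩

lemma persp_mem {K : Finset (Finset V)} {d : ℕ} {σ τ : Finset V}
    (h : Neighboring K d σ τ) {v : V} (hv : v ∈ σ) : persp σ τ v ∈ τ := by
  unfold persp
  split
  · assumption
  · have hne : (τ \ σ).Nonempty := Finset.card_pos.mp (by rw [sdiff_card_one h]; norm_num)
    rw [dif_pos hne]
    exact (Finset.mem_sdiff.mp hne.choose_spec).1

lemma persp_inv {K : Finset (Finset V)} {d : ℕ} {σ τ : Finset V}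
    (h : Neighboring K d σ τ) {v : V} (hv : v ∈ σ) : persp τ σ (persp σ τ v) = v := by
  by_cases hvt : v ∈ τ
  · simp [persp, hvt, hv]
  · have hne : (τ \ σ).Nonempty := Finset.card_pos.mp (by rw [sdiff_card_one h]; norm_num)
    have h1 : persp σ τ v = hne.choose := by simp [persp, hvt, hne]
    have hcs := Finset.mem_sdiff.mp hne.choose_spec
    have hne' : (σ \ τ).Nonempty :=
      Finset.card_pos.mp (by rw [sdiff_card_one (neighboring_symm h)]; norm_num)
    have h2 : persp τ σ hne.choose = hne'.choose := by simp [persp, hcs.2, hne']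
    have huniq := Finset.card_le_one.mp (le_of_eq (sdiff_card_one (neighboring_symm h)))
    rw [h1, h2]
    exact huniq _ hne'.choose_spec _ (Finset.mem_sdiff.mpr ⟨hv, hvt⟩)

lemma projAlong_concat :
    ∀ (γ : List (Finset V)) (σ ρ : Finset V) (v : V), γ.getLast? = some σ →
      projAlong (γ ++ [ρ]) v = persp σ ρ (projAlong γ v)
  | [], _, _, _, h => by simp at h
  | [a], σ, ρ, v, h => by
    simp at h; subst h; rfl
  | a :: b :: rest, σ, ρ, v, h => by
    have ih := projAlong_concat (b :: rest) σ ρ (persp a b v) (by simpa using h)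
    simpa [projAlong] using ih

lemma unfReach_symm {K : Finset (Finset V)} {d : ℕ} {p q : Finset V × V}
    (h : UnfReach K d p q) : UnfReach K d q p :=
  @Std.Symm.symm _ _ (@Relation.ReflTransGen.symmetric _ _ ⟨fun _ _ hs => hs.symm⟩) _ _ h

lemma walk {K : Finset (Finset V)} {d : ℕ} :
    ∀ (γ : List (Finset V)), IsFacetPath K d γ → ∀ (σ τ : Finset V),
      γ.head? = some σ → γ.getLast? = some τ → ∀ v ∈ σ,
      projAlong γ v ∈ τ ∧ UnfReach K d (σ, v) (τ, projAlong γ v)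
  | [], h, _, _, _, _, _, _ => absurd rfl h.1
  | [a], h, σ, τ, hh, hl, v, hv => by
    simp at hh hl; subst hh; subst hl
    exact ⟨hv, Relation.ReflTransGen.refl⟩
  | a :: b :: rest, h, σ, τ, hh, hl, v, hv => by
    simp at hh; subst hh
    obtain ⟨_, hfac, hch⟩ := h
    have hnb : Neighboring K d a b :=
      ⟨hfac a (by simp), hfac b (by simp), (List.isChain_cons_cons.mp hch).1⟩
    have hv' : persp a b v ∈ b := persp_mem hnb hv
    have hpath : IsFacetPath K d (b :: rest) :=
      ⟨by simp, fun ρ hρ => hfac ρ (List.mem_cons_of_mem a hρ), (List.isChain_cons_cons.mp hch).2⟩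
    have ih := walk (b :: rest) hpath b τ (by simp)
      (by rw [← hl]; exact (List.getLast?_cons_cons ..).symm) (persp a b v) hv'
    have hadj : unfAdj K d (a, v) (b, persp a b v) := ⟨hnb, hv, hv', rfl⟩
    refine ⟨by simpa [projAlong] using ih.1, ?_⟩
    have hr : UnfReach K d (a, v) (τ, projAlong (b :: rest) (persp a b v)) :=
      Relation.ReflTransGen.head (Or.inl hadj) ih.2
    simpa [projAlong] using hr

lemma reach_to_path {K : Finset (Finset V)} {d : ℕ} {σ₀ : Finset V}
    (h0 : IsFacet K d σ₀) {v : V} (hv : v ∈ σ₀) :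
    ∀ p, UnfReach K d (σ₀, v) p →
      ∃ γ, IsFacetPath K d γ ∧ γ.head? = some σ₀ ∧ γ.getLast? = some p.1 ∧
        projAlong γ v = p.2 := by
  intro p hp
  induction hp with
  | refl => exact ⟨[σ₀], ⟨by simp, by simpa using h0, List.isChain_singleton _⟩, by simp, by simp, rfl⟩
  | tail _ hstep ih =>
    rename_i b c _
    obtain ⟨γ, hγ, hh, hl, hproj⟩ := ih
    have key : Neighboring K d b.1 c.1 ∧ c.2 ∈ c.1 ∧ persp b.1 c.1 b.2 = c.2 := by
      rcases hstep with hs | hs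
      · exact ⟨hs.1, hs.2.2.1, hs.2.2.2⟩
      · obtain ⟨hnb, hc2, hb2, hpe⟩ := hs
        refine ⟨neighboring_symm hnb, hc2, ?_⟩
        rw [← hpe]; exact persp_inv hnb hc2
    obtain ⟨hnb, hc2, hpe⟩ := key
    refine ⟨γ ++ [c.1], ⟨by simp, ?_, ?_⟩, ?_, by simp, ?_⟩
    · intro ρ hρ
      rcases List.mem_append.mp hρ with h' | h'
      · exact hγ.2.1 ρ h'
      · rw [List.mem_singleton.mp h']; exact hnb.2.1
    · apply List.isChain_append.mpr
      refine ⟨hγ.2.2, List.isChain_singleton _, ?_⟩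
      intro x hx y hy
      rw [hl] at hx; simp at hx hy; subst hx; subst hy
      exact hnb.2.2
    · cases γ with
      | nil => simp at hh
      | cons a l => simpa using hh
    · rw [projAlong_concat γ b.1 c.1 v hl, hproj, hpe]

end Aux
section Aux2

variable {V : Type*} [DecidableEq V]

lemma color_injOn {K : Finset (Finset V)} (hK : IsComplex K) {α : Type*} {c : V → α}
    (hc : ProperColoring K c) {σ : Finset V} (hσ : σ ∈ K) : Set.InjOn c σ := by
  intro v hv w hw hcw
  by_contra hne
  have hsub : ({v, w} : Finset V) ⊆ σ := by
    intro x hx; simp at hx; rcases hx with h | h <;> subst h <;> assumption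
  have hedge : ({v, w} : Finset V) ∈ K :=
    (hK σ hσ).2 {v, w} hsub ⟨v, by simp⟩
  exact hc v w hne hedge hcw

lemma facet_color_image {K : Finset (Finset V)} {d : ℕ} (hK : IsComplex K)
    {c : V → Fin (d + 1)} (hc : ProperColoring K c) {σ : Finset V}
    (hσ : IsFacet K d σ) : σ.image c = Finset.univ := by
  apply Finset.eq_univ_of_card
  rw [Finset.card_image_of_injOn (color_injOn hK hc hσ.1), hσ.2]
  simp

lemma persp_color {K : Finset (Finset V)} {d : ℕ} (hK : IsComplex K)
    {c : V → Fin (d + 1)} (hc : ProperColoring K c) {σ τ : Finset V}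
    (h : Neighboring K d σ τ) {v : V} (hv : v ∈ σ) : c (persp σ τ v) = c v := by
  by_cases hvt : v ∈ τ
  · simp [persp, hvt]
  · have hne : (τ \ σ).Nonempty := Finset.card_pos.mp (by rw [sdiff_card_one h]; norm_num)
    have h1 : persp σ τ v = hne.choose := by simp [persp, hvt, hne]
    have hcs := Finset.mem_sdiff.mp hne.choose_spec
    have himg : c hne.choose ∈ σ.image c := by
      rw [facet_color_image hK hc h.1]; exact Finset.mem_univ _
    obtain ⟨x, hx, hcx⟩ := Finset.mem_image.mp himg
    have hxt : x ∉ τ := by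
      intro hxt
      exact hcs.2 (color_injOn hK hc h.2.1.1 hxt hcs.1 hcx ▸ hx)
    have huniq := Finset.card_le_one.mp (le_of_eq (sdiff_card_one (neighboring_symm h)))
    have hxv : x = v := huniq _ (Finset.mem_sdiff.mpr ⟨hx, hxt⟩) _ (Finset.mem_sdiff.mpr ⟨hv, hvt⟩)
    rw [h1, ← hcx, hxv]

lemma reach_color {K : Finset (Finset V)} {d : ℕ} (hK : IsComplex K)
    {c : V → Fin (d + 1)} (hc : ProperColoring K c) {p q : Finset V × V}
    (h : UnfReach K d p q) : c p.2 = c q.2 := by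
  induction h with
  | refl => rfl
  | tail _ hstep ih =>
    rw [ih]
    rcases hstep with hs | hs
    · rw [← hs.2.2.2]; exact (persp_color hK hc hs.1 hs.2.1).symm
    · rw [← hs.2.2.2]; exact persp_color hK hc hs.1 hs.2.1

end Aux2
/-- The components of the partial unfolding correspond to the orbits of
`Π(K,σ₀)` on `V(σ₀)`; if the action is transitive the unfolding is connected; if `K` is
foldable there are exactly `d+1` components, one per color, and on each facet each color
occurs exactly once (so each component projects isomorphically onto `K`). -/
theorem unfolding_component_count
    (K : Finset (Finset V)) (d : ℕ) (hK : IsComplex K) (hpure : IsPure K d)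
    (hconn : StronglyConnected K d)
    (σ₀ : Finset V) (h0 : IsFacet K d σ₀) :
    (∀ τ w, IsFacet K d τ → w ∈ τ → ∃ v ∈ σ₀, UnfReach K d (σ₀, v) (τ, w)) ∧
    (∀ v ∈ σ₀, ∀ w ∈ σ₀,
      UnfReach K d (σ₀, v) (σ₀, w) ↔
        ∃ γ, IsFacetPath K d γ ∧ γ.head? = some σ₀ ∧ γ.getLast? = some σ₀ ∧
          projAlong γ v = w) ∧
    ((∀ v ∈ σ₀, ∀ w ∈ σ₀, ∃ γ, IsFacetPath K d γ ∧ γ.head? = some σ₀ ∧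
        γ.getLast? = some σ₀ ∧ projAlong γ v = w) →
      ∀ σ τ v w, IsFacet K d σ → IsFacet K d τ → v ∈ σ → w ∈ τ →
        UnfReach K d (σ, v) (τ, w)) ∧
    (∀ c : V → Fin (d + 1), ProperColoring K c →
      (∀ σ τ v w, IsFacet K d σ → IsFacet K d τ → v ∈ σ → w ∈ τ →
        (UnfReach K d (σ, v) (τ, w) ↔ c v = c w)) ∧
      (∀ σ, IsFacet K d σ → ∀ i : Fin (d + 1), ∃! v, v ∈ σ ∧ c v = i)) := by
  have part1 : ∀ τ w, IsFacet K d τ → w ∈ τ → ∃ v ∈ σ₀, UnfReach K d (σ₀, v) (τ, w) := by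
    intro τ w hτ hw
    obtain ⟨γ, hγ, hh, hl⟩ := hconn τ σ₀ hτ h0
    obtain ⟨hmem, hr⟩ := walk γ hγ τ σ₀ hh hl w hw
    exact ⟨_, hmem, unfReach_symm hr⟩
  refine ⟨part1, ?_, ?_, ?_⟩
  · intro v hv w hw
    constructor
    · intro h
      have := reach_to_path h0 hv (σ₀, w) h
      simpa using this
    · rintro ⟨γ, hγ, hh, hl, hp⟩
      have := (walk γ hγ σ₀ σ₀ hh hl v hv).2
      rwa [hp] at this
  · intro htrans σ τ v w hσ hτ hv hw
    obtain ⟨x, hx, hrx⟩ := part1 σ v hσ hv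
    obtain ⟨y, hy, hry⟩ := part1 τ w hτ hw
    obtain ⟨γ, hγ, hh, hl, hp⟩ := htrans x hx y hy
    have hmid := (walk γ hγ σ₀ σ₀ hh hl x hx).2
    rw [hp] at hmid
    exact ((unfReach_symm hrx).trans hmid).trans hry
  · intro c hc
    have huniq : ∀ σ, IsFacet K d σ → ∀ i : Fin (d + 1), ∃! v, v ∈ σ ∧ c v = i := by
      intro σ hσ i
      have : i ∈ σ.image c := by rw [facet_color_image hK hc hσ]; exact Finset.mem_univ _
      obtain ⟨v, hv, hcv⟩ := Finset.mem_image.mp this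
      exact ⟨v, ⟨hv, hcv⟩, fun y hy => color_injOn hK hc hσ.1 hy.1 hv (hy.2.trans hcv.symm)⟩
    refine ⟨?_, huniq⟩
    intro σ τ v w hσ hτ hv hw
    constructor
    · intro h
      exact reach_color hK hc h
    · intro hcvw
      obtain ⟨γ, hγ, hh, hl⟩ := hconn σ τ hσ hτ
      obtain ⟨hmem, hr⟩ := walk γ hγ σ τ hh hl v hv
      have hcol : c (projAlong γ v) = c w := (reach_color hK hc hr).symm.trans hcvw
      have : projAlong γ v = w := color_injOn hK hc hτ.1 hmem hw hcol
      rwa [this] at hr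
end

section
/- Performing two successive stellar subdivisions on an edge e of a simplicial complex K — first subdividing e by a new vertex u, then subdividing one of the two resulting half-edges by a new vertex — yields a complex isomorphic to one obtained by subdividing e into a path of three edges, and in a combinatorial manifold this double subdivision restores the parity of every codimension-2 face of lk_K(e): each codimension-2 face f of K with f ∪ e a facet has the same parity (odd/even) in the resulting complex as in K. -/
open Finset

variable {V : Type*} [DecidableEq V]

lemma mem_stellarSub {K : Finset (Finset V)} {e : Finset V} {u : V} {g : Finset V} :
    g ∈ stellarSub K e u ↔ (g ∈ K ∧ ¬ e ⊆ g) ∨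
      ∃ f ∈ K, e ⊆ f ∧ ∃ x ∈ e, ∃ h, h ⊆ f.erase x ∧ g = insert u h := by
  simp only [stellarSub, mem_union, mem_filter, mem_biUnion, mem_image, mem_powerset]
  constructor
  · rintro (⟨h1, h2⟩ | ⟨f, ⟨hf, hef⟩, x, hx, h, hh, rfl⟩)
    · exact Or.inl ⟨h1, h2⟩
    · exact Or.inr ⟨f, hf, hef, x, hx, h, hh, rfl⟩
  · rintro (⟨h1, h2⟩ | ⟨f, hf, hef, x, hx, h, hh, rfl⟩)
    · exact Or.inl ⟨h1, h2⟩
    · exact Or.inr ⟨f, ⟨hf, hef⟩, x, hx, h, hh, rfl⟩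

lemma mem_vertexSet_of {K : Finset (Finset V)} {g : Finset V} {v : V}
    (hg : g ∈ K) (hv : v ∈ g) : v ∈ vertexSet K :=
  mem_biUnion.2 ⟨g, hg, hv⟩

set_option maxHeartbeats 1600000 in
/-- Subdividing an edge `e` stellarly by `u` and then subdividing one of
the two half-edges `{x, u}` (for `x ∈ e`) by `u'` amounts to subdividing `e` into a path
of three edges: away from the new vertices the complex agrees with `K` minus the faces
containing `e`, and the double subdivision restores the parity of every codimension-2
face `f` of `K` with `f ∪ e` a facet. -/
theorem double_subdivision_restores_parity
    (K : Finset (Finset V)) (d : ℕ) (hK : IsComplex K) (hpure : IsPure K d)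
    (hlsc : LocallyStronglyConnected K d)
    (e : Finset V) (he : e ∈ K) (hecard : e.card = 2)
    (u : V) (hu : u ∉ vertexSet K)
    (x : V) (hx : x ∈ e)
    (u' : V) (hu' : u' ∉ vertexSet (stellarSub K e u))
    (he' : ({x, u} : Finset V) ∈ stellarSub K e u) :
    ((stellarSub (stellarSub K e u) {x, u} u').filter
        (fun g => u ∉ g ∧ u' ∉ g) = K.filter fun g => ¬ e ⊆ g) ∧
    (∀ f ∈ K, f.card + 2 = d + 1 → (f ∪ e) ∈ K → (f ∪ e).card = d + 1 →
      (OddFace (stellarSub (stellarSub K e u) {x, u} u') f ↔ OddFace K f)) := by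
  classical
  -- Notation
  have hK2def : True := trivial
  -- u does not lie in any face of K
  have huK : ∀ g ∈ K, u ∉ g := fun g hg h => hu (mem_vertexSet_of hg h)
  -- extract the second vertex y of e
  have h1 : (e.erase x).card = 1 := by rw [card_erase_of_mem hx, hecard]
  obtain ⟨y, hy⟩ := card_eq_one.1 h1
  have hyex : y ∈ e.erase x := hy ▸ mem_singleton_self y
  have hyx : y ≠ x := (mem_erase.1 hyex).1
  have hye : y ∈ e := (mem_erase.1 hyex).2
  have he_eq : e = {x, y} := by rw [← insert_erase hx, hy]
  -- vertices of K are vertices of the subdivision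
  have hvK : ∀ v ∈ vertexSet K, v ∈ vertexSet (stellarSub K e u) := by
    intro v hv
    obtain ⟨g, hg, hvg⟩ := mem_biUnion.1 hv
    have hsing : ({v} : Finset V) ∈ K :=
      (hK g hg).2 {v} (singleton_subset_iff.2 hvg) ⟨v, mem_singleton_self v⟩
    have hmem : ({v} : Finset V) ∈ stellarSub K e u := by
      refine mem_stellarSub.2 (Or.inl ⟨hsing, fun hsub => ?_⟩)
      have := card_le_card hsub
      simp [hecard] at this
    exact mem_vertexSet_of hmem (mem_singleton_self v)
  have hu'K : u' ∉ vertexSet K := fun h => hu' (hvK u' h)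
  have hu'K2 : ∀ g ∈ stellarSub K e u, u' ∉ g := fun g hg h => hu' (mem_vertexSet_of hg h)
  have huu' : u ≠ u' := by
    intro h
    exact hu' (h ▸ mem_vertexSet_of he' (mem_insert_of_mem (mem_singleton_self u)))
  have hxvK : x ∈ vertexSet K := mem_vertexSet_of he hx
  have hyvK : y ∈ vertexSet K := mem_vertexSet_of he hye
  have hxu : x ≠ u := fun h => hu (h ▸ hxvK)
  have hxu' : x ≠ u' := fun h => hu'K (h ▸ hxvK)
  have hyu : y ≠ u := fun h => hu (h ▸ hyvK)
  have hyu' : y ≠ u' := fun h => hu'K (h ▸ hyvK)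
  -- Part 1
  have part1 : (stellarSub (stellarSub K e u) {x, u} u').filter
      (fun g => u ∉ g ∧ u' ∉ g) = K.filter fun g => ¬ e ⊆ g := by
    ext g
    simp only [mem_filter]
    constructor
    · rintro ⟨hg3, hgu, hgu'⟩
      rcases mem_stellarSub.1 hg3 with ⟨hg2, _⟩ | ⟨τ, hτ, _, z, hz, h, hh, rfl⟩
      · rcases mem_stellarSub.1 hg2 with ⟨hgK, hge⟩ | ⟨σ, hσ, hσe, z, hz, h, hh, rfl⟩
        · exact ⟨hgK, hge⟩
        · exact absurd (mem_insert_self u h) hgu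
      · exact absurd (mem_insert_self u' h) hgu'
    · rintro ⟨hgK, hge⟩
      have hgu : u ∉ g := huK g hgK
      have hgu' : u' ∉ g := fun h => hu'K (mem_vertexSet_of hgK h)
      refine ⟨mem_stellarSub.2 (Or.inl ⟨mem_stellarSub.2 (Or.inl ⟨hgK, hge⟩), ?_⟩), hgu, hgu'⟩
      intro hsub
      exact hgu (hsub (mem_insert_of_mem (mem_singleton_self u)))
  refine ⟨part1, ?_⟩
  -- Part 2
  intro f hf hfcard hfeK hfecard
  have hbound : ∀ g ∈ K, g.card ≤ d + 1 := by
    intro g hg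
    obtain ⟨σ, hσ, hsub, hcard⟩ := hpure g hg
    exact hcard ▸ card_le_card hsub
  have hdisj : f ∩ e = ∅ := by
    have hc := card_union_add_card_inter f e
    rw [hfecard, hecard] at hc
    have : (f ∩ e).card = 0 := by omega
    exact card_eq_zero.1 this
  have hxf : x ∉ f := by
    intro h
    have : x ∈ f ∩ e := mem_inter.2 ⟨h, hx⟩
    simp [hdisj] at this
  have hyf : y ∉ f := by
    intro h
    have : y ∈ f ∩ e := mem_inter.2 ⟨h, hye⟩
    simp [hdisj] at this
  have huf : u ∉ f := fun h => hu (mem_vertexSet_of hf h)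
  have hu'f : u' ∉ f := fun h => hu'K (mem_vertexSet_of hf h)
  have hfxK : f ∪ {x} ⊆ (f ∪ e).erase y := by
    rw [subset_erase]
    constructor
    · exact union_subset subset_union_left
        ((singleton_subset_iff.2 hx).trans subset_union_right)
    · simp only [mem_union, mem_singleton]
      rintro (h | h)
      · exact hyf h
      · exact hyx h
  have hτ0 : insert u (f ∪ {x}) ∈ stellarSub K e u :=
    mem_stellarSub.2 (Or.inr ⟨f ∪ e, hfeK, subset_union_right, y, hye, f ∪ {x}, hfxK, rfl⟩)
  have hxuτ0 : ({x, u} : Finset V) ⊆ insert u (f ∪ {x}) := by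
    intro v hv
    rcases mem_insert.1 hv with rfl | hv
    · exact mem_insert_of_mem (mem_union_right _ (mem_singleton_self v))
    · rw [mem_singleton.1 hv]; exact mem_insert_self u _
  have hunotfx : u ∉ f ∪ {x} := by
    simp only [mem_union, mem_singleton]
    rintro (h | h)
    · exact huf h
    · exact hxu h.symm
  have hxnotfu : x ∉ f ∪ {u} := by
    simp only [mem_union, mem_singleton]
    rintro (h | h)
    · exact hxf h
    · exact hxu h
  -- M1 : f ∪ {u, y} ∈ K3
  have M1 : f ∪ {u, y} ∈ stellarSub (stellarSub K e u) {x, u} u' := by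
    have heq : f ∪ {u, y} = insert u (f ∪ {y}) := by
      ext v; simp only [mem_union, mem_insert, mem_singleton]; tauto
    have hfyK : f ∪ {y} ⊆ (f ∪ e).erase x := by
      rw [subset_erase]
      constructor
      · exact union_subset subset_union_left
          ((singleton_subset_iff.2 hye).trans subset_union_right)
      · simp only [mem_union, mem_singleton]
        rintro (h | h)
        · exact hxf h
        · exact hyx h.symm
    have hK2 : insert u (f ∪ {y}) ∈ stellarSub K e u :=
      mem_stellarSub.2 (Or.inr ⟨f ∪ e, hfeK, subset_union_right, x, hx, f ∪ {y}, hfyK, rfl⟩)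
    rw [heq]
    refine mem_stellarSub.2 (Or.inl ⟨hK2, fun hsub => ?_⟩)
    have hxmem : x ∈ insert u (f ∪ {y}) := hsub (mem_insert_self x _)
    rcases mem_insert.1 hxmem with h | h
    · exact hxu h
    · rcases mem_union.1 h with h | h
      · exact hxf h
      · exact hyx (mem_singleton.1 h).symm
  -- M3 : f ∪ {x, u'} ∈ K3
  have M3 : f ∪ {x, u'} ∈ stellarSub (stellarSub K e u) {x, u} u' := by
    have heq : f ∪ {x, u'} = insert u' (f ∪ {x}) := by
      ext v; simp only [mem_union, mem_insert, mem_singleton]; tauto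
    rw [heq]
    refine mem_stellarSub.2 (Or.inr ⟨insert u (f ∪ {x}), hτ0, hxuτ0, u,
      mem_insert_of_mem (mem_singleton_self u), f ∪ {x}, ?_, rfl⟩)
    rw [subset_erase]
    exact ⟨subset_insert _ _, hunotfx⟩
  -- M4 : f ∪ {u', u} ∈ K3
  have M4 : f ∪ {u', u} ∈ stellarSub (stellarSub K e u) {x, u} u' := by
    have heq : f ∪ {u', u} = insert u' (f ∪ {u}) := by
      ext v; simp only [mem_union, mem_insert, mem_singleton]; tauto
    rw [heq]
    refine mem_stellarSub.2 (Or.inr ⟨insert u (f ∪ {x}), hτ0, hxuτ0, x,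
      mem_insert_self x _, f ∪ {u}, ?_, rfl⟩)
    rw [subset_erase]
    refine ⟨union_subset (subset_union_left.trans (subset_insert _ _)) ?_, hxnotfu⟩
    exact singleton_subset_iff.2 (mem_insert_self u _)
  -- Neighbor classification for u
  have NU : ∀ w, w ∉ f → w ≠ u →
      f ∪ {u, w} ∈ stellarSub (stellarSub K e u) {x, u} u' → w = y ∨ w = u' := by
    intro w hwf hwu hm
    by_contra hcon
    push_neg at hcon
    obtain ⟨hwy, hwu'⟩ := hcon
    have humem : u ∈ f ∪ {u, w} := mem_union_right _ (mem_insert_self u _)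
    rcases mem_stellarSub.1 hm with ⟨hg2, hns⟩ | ⟨τ, hτ, _, z, hz, h, hh, heq⟩
    · have hwx : w ≠ x := by
        rintro rfl
        apply hns
        intro v hv
        rcases mem_insert.1 hv with rfl | hv
        · exact mem_union_right _ (mem_insert_of_mem (mem_singleton_self v))
        · rw [mem_singleton.1 hv]; exact humem
      rcases mem_stellarSub.1 hg2 with ⟨hgK, _⟩ | ⟨σ, hσ, heσ, z, hz, h, hh, heq⟩
      · exact hu (mem_vertexSet_of hgK humem)
      · have huσ : u ∉ σ := huK σ hσ
        have hsub : f ∪ {w} ⊆ h := by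
          intro v hv
          have hv3 : v ∈ f ∪ {u, w} := by
            rcases mem_union.1 hv with h' | h'
            · exact mem_union_left _ h'
            · rw [mem_singleton.1 h']
              exact mem_union_right _ (mem_insert_of_mem (mem_singleton_self w))
          rw [heq] at hv3
          rcases mem_insert.1 hv3 with rfl | hv3
          · exfalso
            rcases mem_union.1 hv with h' | h'
            · exact huf h'
            · exact hwu (mem_singleton.1 h').symm
          · exact hv3
        have hhσ : h ⊆ σ := hh.trans (erase_subset _ _)
        have hσbig : insert w (f ∪ e) ⊆ σ := by
          intro v hv
          rcases mem_insert.1 hv with rfl | hv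
          · exact hhσ (hsub (mem_union_right _ (mem_singleton_self v)))
          · rcases mem_union.1 hv with h' | h'
            · exact hhσ (hsub (mem_union_left _ h'))
            · exact heσ h'
        have hwfe : w ∉ f ∪ e := by
          simp only [mem_union]
          rintro (h' | h')
          · exact hwf h'
          · rw [he_eq] at h'
            rcases mem_insert.1 h' with h'' | h''
            · exact hwx h''
            · exact hwy (mem_singleton.1 h'')
        have hcard2 : (insert w (f ∪ e)).card = d + 2 := by
          rw [card_insert_of_notMem hwfe, hfecard]
        have := card_le_card hσbig
        have := hbound σ hσ
        omega
    · have : u' ∈ f ∪ {u, w} := heq ▸ mem_insert_self u' h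
      rcases mem_union.1 this with h' | h'
      · exact hu'f h'
      · rcases mem_insert.1 h' with h'' | h''
        · exact huu' h''.symm
        · exact hwu' (mem_singleton.1 h'').symm
  -- Neighbor classification for u'
  have NU' : ∀ w, w ∉ f → w ≠ u' →
      f ∪ {u', w} ∈ stellarSub (stellarSub K e u) {x, u} u' → w = x ∨ w = u := by
    intro w hwf hwu' hm
    by_contra hcon
    push_neg at hcon
    obtain ⟨hwx, hwu⟩ := hcon
    have hu'mem : u' ∈ f ∪ {u', w} := mem_union_right _ (mem_insert_self u' _)
    rcases mem_stellarSub.1 hm with ⟨hg2, _⟩ | ⟨τ, hτ2, hxuτ, z, hz, h, hh, heq⟩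
    · exact hu' (mem_vertexSet_of hg2 hu'mem)
    · have hu'τ : u' ∉ τ := hu'K2 τ hτ2
      have hsub : f ∪ {w} ⊆ h := by
        intro v hv
        have hv3 : v ∈ f ∪ {u', w} := by
          rcases mem_union.1 hv with h' | h'
          · exact mem_union_left _ h'
          · rw [mem_singleton.1 h']
            exact mem_union_right _ (mem_insert_of_mem (mem_singleton_self w))
        rw [heq] at hv3
        rcases mem_insert.1 hv3 with rfl | hv3
        · exfalso
          rcases mem_union.1 hv with h' | h'
          · exact hu'f h'
          · exact hwu' (mem_singleton.1 h').symm
        · exact hv3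
      have hfwτ : f ∪ {w} ⊆ τ := hsub.trans (hh.trans (erase_subset _ _))
      have huτ : u ∈ τ := hxuτ (mem_insert_of_mem (mem_singleton_self u))
      have hxτ : x ∈ τ := hxuτ (mem_insert_self x _)
      rcases mem_stellarSub.1 hτ2 with ⟨hτK, _⟩ | ⟨σ, hσ, heσ, z', hz', h', hh', heqτ⟩
      · exact hu (mem_vertexSet_of hτK huτ)
      · have huσ : u ∉ σ := huK σ hσ
        have hsub2 : insert x (f ∪ {w}) ⊆ h' := by
          intro v hv
          have hvτ : v ∈ τ := by
            rcases mem_insert.1 hv with rfl | hv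
            · exact hxτ
            · exact hfwτ hv
          rw [heqτ] at hvτ
          rcases mem_insert.1 hvτ with rfl | hvτ
          · exfalso
            rcases mem_insert.1 hv with h'' | h''
            · exact hxu h''.symm
            · rcases mem_union.1 h'' with h3 | h3
              · exact huf h3
              · exact hwu (mem_singleton.1 h3).symm
          · exact hvτ
        have hh'σ : h' ⊆ σ := hh'.trans (erase_subset _ _)
        rw [he_eq] at hz'
        rcases mem_insert.1 hz' with h4 | h4
        · rw [h4] at hh'
          exact notMem_erase x σ (hh' (hsub2 (mem_insert_self _ _)))
        · rw [mem_singleton.1 h4] at hh'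
          have hwy : w ≠ y := by
            rintro rfl
            exact notMem_erase w σ
              (hh' (hsub2 (mem_insert_of_mem (mem_union_right _ (mem_singleton_self w)))))
          have hσbig : insert w (f ∪ e) ⊆ σ := by
            intro v hv
            rcases mem_insert.1 hv with rfl | hv
            · exact hh'σ (hsub2 (mem_insert_of_mem (mem_union_right _ (mem_singleton_self v))))
            · rcases mem_union.1 hv with h3 | h3
              · exact hh'σ (hsub2 (mem_insert_of_mem (mem_union_left _ h3)))
              · exact heσ h3
          have hwfe : w ∉ f ∪ e := by
            simp only [mem_union]
            rintro (h3 | h3)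
            · exact hwf h3
            · rw [he_eq] at h3
              rcases mem_insert.1 h3 with h4 | h4
              · exact hwx h4
              · exact hwy (mem_singleton.1 h4)
          have hcard2 : (insert w (f ∪ e)).card = d + 2 := by
            rw [card_insert_of_notMem hwfe, hfecard]
          have := card_le_card hσbig
          have := hbound σ hσ
          omega
  have hfxyK : f ∪ {x, y} ∈ K := by rw [← he_eq]; exact hfeK
  -- main equivalence of colorability
  have hmain : (∃ b : V → Bool, ∀ w w', w ∉ f → w' ∉ f → w ≠ w' →
        f ∪ {w, w'} ∈ stellarSub (stellarSub K e u) {x, u} u' → b w ≠ b w') ↔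
      (∃ b : V → Bool, ∀ w w', w ∉ f → w' ∉ f → w ≠ w' →
        f ∪ {w, w'} ∈ K → b w ≠ b w') := by
    constructor
    · rintro ⟨b3, hb3⟩
      refine ⟨b3, ?_⟩
      intro w w' hwf hw'f hne hmem
      by_cases hsubE : e ⊆ f ∪ {w, w'}
      · -- {w,w'} = {x,y}
        have hxin : x ∈ ({w, w'} : Finset V) := by
          have := hsubE hx
          rcases mem_union.1 this with h' | h'
          · exact absurd h' hxf
          · exact h'
        have hyin : y ∈ ({w, w'} : Finset V) := by
          have := hsubE hye
          rcases mem_union.1 this with h' | h'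
          · exact absurd h' hyf
          · exact h'
        have h1 : b3 x ≠ b3 u' := hb3 x u' hxf hu'f hxu' M3
        have h2 : b3 u' ≠ b3 u := hb3 u' u hu'f huf (Ne.symm huu') M4
        have h3 : b3 u ≠ b3 y := hb3 u y huf hyf (Ne.symm hyu) M1
        have hxy3 : b3 x ≠ b3 y := by
          revert h1 h2 h3
          cases b3 x <;> cases b3 u' <;> cases b3 u <;> cases b3 y <;> simp
        have hcase : (w = x ∧ w' = y) ∨ (w = y ∧ w' = x) := by
          rcases mem_insert.1 hxin with h1' | h1'
          · rcases mem_insert.1 hyin with h2' | h2'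
            · exact absurd (h2'.trans h1'.symm) hyx
            · exact Or.inl ⟨h1'.symm, (mem_singleton.1 h2').symm⟩
          · have hxw' := mem_singleton.1 h1'
            rcases mem_insert.1 hyin with h2' | h2'
            · exact Or.inr ⟨h2'.symm, hxw'.symm⟩
            · exact absurd ((mem_singleton.1 h2').trans hxw'.symm) hyx
        rcases hcase with ⟨hw1, hw2⟩ | ⟨hw1, hw2⟩
        · rw [hw1, hw2]; exact hxy3
        · rw [hw1, hw2]; exact hxy3.symm
      · have hmem3 : f ∪ {w, w'} ∈ stellarSub (stellarSub K e u) {x, u} u' := by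
          refine mem_stellarSub.2 (Or.inl ⟨mem_stellarSub.2 (Or.inl ⟨hmem, hsubE⟩),
            fun hc => ?_⟩)
          exact hu (mem_vertexSet_of hmem (hc (mem_insert_of_mem (mem_singleton_self u))))
        exact hb3 w w' hwf hw'f hne hmem3
    · rintro ⟨b, hb⟩
      have hbxy : b x ≠ b y := hb x y hxf hyf (fun h => hyx h.symm) hfxyK
      refine ⟨fun v => if v = u then b x else if v = u' then !(b x) else b v, ?_⟩
      set b3 : V → Bool := fun v =>
        if v = u then b x else if v = u' then !(b x) else b v with hb3def
      have hb3u : b3 u = b x := by rw [hb3def]; simp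
      have hb3u' : b3 u' = !(b x) := by rw [hb3def]; simp [Ne.symm huu']
      have hb3x : b3 x = b x := by rw [hb3def]; simp [hxu, hxu']
      have hb3y : b3 y = b y := by rw [hb3def]; simp [hyu, hyu']
      have hb3w : ∀ v, v ≠ u → v ≠ u' → b3 v = b v := by
        intro v h1' h2'
        rw [hb3def]; simp [h1', h2']
      intro w w' hwf hw'f hne hmem
      by_cases hwu : w = u
      · rw [show ({w, w'} : Finset V) = {u, w'} from by rw [hwu]] at hmem
        rcases NU w' hw'f (fun h => hne (hwu.trans h.symm)) hmem with h' | h'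
        · rw [hwu, h', hb3u, hb3y]; exact hbxy
        · rw [hwu, h', hb3u, hb3u']
          cases b x <;> simp
      · by_cases hw'u : w' = u
        · rw [show ({w, w'} : Finset V) = {u, w} from by rw [hw'u, pair_comm]] at hmem
          rcases NU w hwf hwu hmem with h' | h'
          · rw [hw'u, h', hb3u, hb3y]; exact hbxy.symm
          · rw [hw'u, h', hb3u, hb3u']
            cases b x <;> simp
        · by_cases hwu' : w = u'
          · rw [show ({w, w'} : Finset V) = {u', w'} from by rw [hwu']] at hmem
            rcases NU' w' hw'f (fun h => hne (hwu'.trans h.symm)) hmem with h' | h'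
            · rw [hwu', h', hb3u', hb3x]
              cases b x <;> simp
            · exact absurd h' hw'u
          · by_cases hw'u' : w' = u'
            · rw [show ({w, w'} : Finset V) = {u', w} from by rw [hw'u', pair_comm]] at hmem
              rcases NU' w hwf hwu' hmem with h' | h'
              · rw [hw'u', h', hb3x, hb3u']
                cases b x <;> simp
              · exact absurd h' hwu
            · have hnu : u ∉ f ∪ {w, w'} := by
                simp only [mem_union, mem_insert, mem_singleton]
                rintro (h' | h' | h')
                · exact huf h'
                · exact hwu h'.symm
                · exact hw'u h'.symm
              have hnu' : u' ∉ f ∪ {w, w'} := by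
                simp only [mem_union, mem_insert, mem_singleton]
                rintro (h' | h' | h')
                · exact hu'f h'
                · exact hwu' h'.symm
                · exact hw'u' h'.symm
              have hmemK : f ∪ {w, w'} ∈ K := by
                have hfil : f ∪ {w, w'} ∈ (stellarSub (stellarSub K e u) {x, u} u').filter
                    (fun g => u ∉ g ∧ u' ∉ g) := mem_filter.2 ⟨hmem, hnu, hnu'⟩
                rw [part1] at hfil
                exact (mem_filter.1 hfil).1
              rw [hb3w w hwu hwu', hb3w w' hw'u hw'u']
              exact hb w w' hwf hw'f hne hmemK
  simp only [OddFace]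
  exact not_congr hmain
end
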